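/- Let q > 0 and p ∈ ℝ. Define L₀(γ) = -p²γ/(2(1+qγ)) + (1/2)log(1+qγ) on [0,∞). If q - p² ≥ 0, then γ = 0 is the unique global minimizer of L₀ on [0,∞); if q - p² < 0, then γ* = (p² - q)/q² is the unique global minimizer of L₀ on [0,∞). -/

import Mathlib

lemma aux_log_pos (u : ℝ) (hu : 0 < u) (hne : u ≠ 1) :
    0 < Real.log u + 1/u - 1 := by
  have h := Real.log_lt_sub_one_of_pos (x := u⁻¹) (by positivity)
    (by simpa using hne)
  rw [Real.log_inv] at h
  have : (1:ℝ)/u = u⁻¹ := one_div u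
  linarith

theorem stmt_4 (q p : ℝ) (hq : 0 < q) (L₀ : ℝ → ℝ)
    (hL : ∀ γ : ℝ, L₀ γ = -(p^2 * γ) / (2 * (1 + q * γ)) + (1/2) * Real.log (1 + q * γ)) :
    (0 ≤ q - p^2 → ∀ γ : ℝ, 0 ≤ γ → γ ≠ 0 → L₀ 0 < L₀ γ) ∧
    (q - p^2 < 0 → ∀ γ : ℝ, 0 ≤ γ → γ ≠ (p^2 - q) / q^2 →
      L₀ ((p^2 - q) / q^2) < L₀ γ) := by
  constructor
  · intro hle γ hγ hne
    have hγpos : 0 < γ := lt_of_le_of_ne hγ (Ne.symm hne)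
    set t := 1 + q * γ with ht
    have ht1 : 1 < t := by nlinarith
    have ht0 : 0 < t := by linarith
    have hL0 : L₀ 0 = 0 := by rw [hL]; simp
    rw [hL0, hL γ, ← ht]
    have key := aux_log_pos t ht0 (ne_of_gt ht1)
    have hinv : t * (1/t) = 1 := by field_simp
    have h1 : p^2 * γ ≤ q * γ := by nlinarith
    have h2 : 0 < -(p^2 * γ) + t * Real.log t := by
      have hm := mul_pos ht0 key
      nlinarith [hm]
    have h3 : -(p^2 * γ) / (2 * t) + 1/2 * Real.log t
        = (-(p^2 * γ) + t * Real.log t) / (2 * t) := by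
      field_simp
    rw [h3]
    positivity
  · intro hlt γ hγ hne
    have hp2 : q < p^2 := by linarith
    have hp0 : (0:ℝ) < p^2 := by linarith
    set a := p^2 / q with ha
    have ha1 : 1 < a := by rw [ha, lt_div_iff₀ hq]; linarith
    have ha0 : 0 < a := by linarith
    set t := 1 + q * γ with ht
    have ht0 : 0 < t := by nlinarith
    have hta : t ≠ a := by
      intro h
      apply hne
      rw [ht, ha] at h
      field_simp
      field_simp at h
      nlinarith [h]
    have e1 : 1 + q * ((p^2 - q) / q^2) = a := by
      rw [ha]; field_simp; ring
    rw [hL, hL, e1, ← ht]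
    have hu0 : 0 < t / a := by positivity
    have hune : t / a ≠ 1 := by
      intro h
      exact hta (by field_simp at h; linarith)
    have key := aux_log_pos (t/a) hu0 hune
    rw [Real.log_div ht0.ne' ha0.ne'] at key
    have hdiv : (1:ℝ) / (t/a) = a / t := by field_simp
    rw [hdiv] at key
    have e2 : -(p^2 * ((p^2 - q) / q^2)) / (2 * a) + (p^2 * γ) / (2 * t)
        = (1 - a / t) / 2 := by
      rw [ha]
      have hp : p ≠ 0 := by rintro rfl; simp at hp0
      field_simp
      rw [ht]; ring
    -- goal : -(p^2*γ*)/(2*a) + 1/2 * log a < -(p^2*γ)/(2*t) + 1/2 * log t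
    have e3 : -(p^2 * γ) / (2 * t) = -(p^2 * γ / (2 * t)) := by ring
    have e4 : -(p^2 * ((p^2 - q) / q^2)) / (2 * a)
        = -(p^2 * ((p^2 - q) / q^2) / (2 * a)) := by ring
    linarith [key, e2]
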